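/- One has the identity κ_t·u_II² − 2·a_II = (κ_t + κ_H)·π_II². Consequently, if 0 ≤ σ_y < √(2 κ_t a_I), then 2·a_II/u_II² < κ_t, i.e. the tangential stiffness of the linear elastic-brittle interface fitted to have the same Mode-II rupture displacement and fracture energy is strictly lower than the tangential stiffness κ_t of the plasticity-based model. -/

import Mathlib

/-- One has `κt·u_II² − 2·a_II = (κt + κH)·π_II²`; consequently,
if `0 ≤ σy < √(2 κt a_I)`, then `2·a_II/u_II² < κt`: the tangential stiffness of
the linear elastic-brittle interface fitted to the same Mode-II rupture
displacement and fracture energy is strictly lower than `κt`. -/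
theorem stmt9 (κt κH aI σy σc πII uII aII : ℝ)
    (hκt : 0 < κt) (hκH : 0 < κH) (haI : 0 < aI)
    (hσy : 0 ≤ σy) (hσy' : σy ≤ Real.sqrt (2 * κt * aI))
    (hσc : σc = Real.sqrt (2 * κt * aI))
    (hπII : πII = (σc - σy) / κH)
    (huII : uII = (σc * (κt + κH) - σy * κt) / (κt * κH))
    (haII : aII = aI + σy * πII + (1 / 2) * κH * πII ^ 2) :
    κt * uII ^ 2 - 2 * aII = (κt + κH) * πII ^ 2 ∧
    (σy < Real.sqrt (2 * κt * aI) → 2 * aII / uII ^ 2 < κt) := by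
  have hσc2 : σc ^ 2 = 2 * κt * aI := by
    rw [hσc, sq]; exact Real.mul_self_sqrt (by positivity)
  have hπ' : κH * πII = σc - σy := by
    rw [hπII]; field_simp
  have huII' : uII = σc / κt + πII := by
    rw [huII, hπII]; field_simp; ring
  have hid : κt * uII ^ 2 - 2 * aII = (κt + κH) * πII ^ 2 := by
    rw [huII', haII]
    field_simp
    linear_combination hσc2 + (-2 * κt * πII) * hπ'
  refine ⟨hid, fun hlt => ?_⟩
  have hσyc : σy < σc := hσc ▸ hlt
  have hπpos : 0 < πII := by rw [hπII]; exact div_pos (by linarith) hκH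
  have huIIpos : 0 < uII := by
    have h0 : 0 ≤ σc / κt := div_nonneg (hσc ▸ Real.sqrt_nonneg _) hκt.le
    rw [huII']; linarith
  rw [div_lt_iff₀ (by positivity)]
  have h2 : 0 < (κt + κH) * πII ^ 2 := mul_pos (by linarith) (pow_pos hπpos 2)
  nlinarith [hid]
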